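/- Let G be a simple graph of order n > 1 and size m, and let Ḡ denote its complement. Then n·M2(Ḡ) - (n(n-1)/2 - m)·M1(Ḡ) ≥ m·M1(G) - n·M2(G), with equality if and only if G is regular. -/

import Mathlib

/-- Degree of a vertex (classical, so it works for any graph on a finite vertex type). -/
noncomputable def gdeg {V : Type*} [Fintype V] (G : SimpleGraph V) (v : V) : ℕ := by
  classical exact G.degree v

/-- First Zagreb index: sum of squares of the vertex degrees. -/
noncomputable def zagrebM1 {V : Type*} [Fintype V] (G : SimpleGraph V) : ℕ :=
  ∑ v, gdeg G v ^ 2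

/-- Second Zagreb index: sum of d(u)·d(v) over the edges uv. -/
noncomputable def zagrebM2 {V : Type*} [Fintype V] (G : SimpleGraph V) : ℕ := by
  classical exact
    ∑ e ∈ G.edgeFinset,
      Sym2.lift ⟨fun u v => gdeg G u * gdeg G v, fun u v => by simp [Nat.mul_comm]⟩ e

/-- The size (number of edges) of a graph. -/
noncomputable def gsize {V : Type*} [Fintype V] (G : SimpleGraph V) : ℕ := by
  classical exact G.edgeFinset.card

/-- A graph is `r`-regular if every vertex has degree `r`. -/
def gregOfDeg {V : Type*} [Fintype V] (G : SimpleGraph V) (r : ℕ) : Prop :=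
  ∀ v, gdeg G v = r

/-- A graph is regular if all its vertices have the same degree. -/
def gregular {V : Type*} [Fintype V] (G : SimpleGraph V) : Prop :=
  ∃ r, gregOfDeg G r

section Aux

open Finset SimpleGraph

set_option linter.unusedSectionVars false

variable {V : Type*} [Fintype V] [DecidableEq V] (G : SimpleGraph V) [DecidableRel G.Adj]

lemma gdeg_eq (v : V) : gdeg G v = G.degree v := by unfold gdeg; congr!

lemma gsize_eq : gsize G = G.edgeFinset.card := by unfold gsize; congr!

lemma zagrebM1_eq : zagrebM1 G = ∑ v, G.degree v ^ 2 := by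
  unfold zagrebM1
  exact Finset.sum_congr rfl fun v _ => by rw [gdeg_eq]

lemma zagrebM2_eq (hs : ∀ u v : V, G.degree u * G.degree v = G.degree v * G.degree u) :
    zagrebM2 G = ∑ e ∈ G.edgeFinset,
      Sym2.lift ⟨fun u v => G.degree u * G.degree v, hs⟩ e := by
  unfold zagrebM2
  have hf : (fun u v => gdeg G u * gdeg G v) = fun u v => G.degree u * G.degree v := by
    funext u v; rw [gdeg_eq, gdeg_eq]
  congr! 2
  exact Subtype.ext hf

lemma dart_sum (f : V → V → ℕ) :
    ∑ d : G.Dart, f d.fst d.snd = ∑ u, ∑ v ∈ G.neighborFinset u, f u v := by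
  rw [← Finset.sum_fiberwise_of_maps_to (g := fun d : G.Dart => d.fst)
      (fun d _ => mem_univ _) (f := fun d : G.Dart => f d.fst d.snd)]
  refine Finset.sum_congr rfl fun u _ => ?_
  have h : (univ.filter fun d : G.Dart => d.fst = u) = univ.image (G.dartOfNeighborSet u) := by
    simpa using G.dart_fst_fiber u
  rw [h, Finset.sum_image (fun a _ b _ h => G.dartOfNeighborSet_injective u h),
    Finset.sum_subtype (p := (· ∈ G.neighborSet u)) (G.neighborFinset u) (by simp) (fun v => f u v)]
  rfl

lemma edge_sum (f : V → V → ℕ) (hf : ∀ u v, f u v = f v u) :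
    2 * ∑ e ∈ G.edgeFinset, Sym2.lift ⟨f, hf⟩ e = ∑ u, ∑ v ∈ G.neighborFinset u, f u v := by
  rw [← dart_sum]
  rw [← Finset.sum_fiberwise_of_maps_to (g := fun d : G.Dart => d.edge) (t := G.edgeFinset)
      (fun d _ => by simp [SimpleGraph.Dart.edge_mem])
      (f := fun d : G.Dart => f d.fst d.snd), Finset.mul_sum]
  refine (Finset.sum_congr rfl fun e he => ?_).symm
  rw [mem_edgeFinset] at he
  induction' e with v w
  let d : G.Dart := ⟨(v, w), he⟩
  have hfib : (univ.filter fun d' : G.Dart => d'.edge = d.edge) = {d, d.symm} := by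
    simpa using d.edge_fiber
  have : (univ.filter fun d' : G.Dart => d'.edge = s(v, w)) = {d, d.symm} := hfib
  rw [this, Finset.sum_insert (by simp [Finset.mem_singleton]; exact d.symm_ne.symm),
    Finset.sum_singleton]
  simp only [Sym2.lift_mk]
  show f v w + f w v = 2 * f v w
  rw [hf w v]; ring

lemma nbhd_transpose (g : V → ℤ) :
    ∑ u, ∑ v ∈ G.neighborFinset u, g v = ∑ v, (G.degree v : ℤ) * g v := by
  have h1 : ∀ u, ∑ v ∈ G.neighborFinset u, g v = ∑ v, if G.Adj u v then g v else 0 := by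
    intro u
    rw [neighborFinset_eq_filter, Finset.sum_filter]
  simp only [h1]
  rw [Finset.sum_comm]
  refine Finset.sum_congr rfl fun v _ => ?_
  have h2 : (univ.filter fun u => G.Adj u v) = G.neighborFinset v := by
    ext u; simp [SimpleGraph.adj_comm]
  rw [← Finset.sum_filter, h2, Finset.sum_const, nsmul_eq_mul, SimpleGraph.degree]

lemma sum_compl_nbhd (g : V → ℤ) (u : V) :
    ∑ v ∈ Gᶜ.neighborFinset u, g v
      = (∑ v, g v) - g u - ∑ v ∈ G.neighborFinset u, g v := by
  rw [SimpleGraph.neighborFinset_compl]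
  have hsub : {u} ⊆ (G.neighborFinset u)ᶜ := by
    simp [Finset.singleton_subset_iff]
  rw [Finset.sum_sdiff_eq_sub hsub, Finset.sum_singleton]
  have h2 := Finset.sum_compl_add_sum (G.neighborFinset u) g
  linarith

lemma regular_of_card_two (h : Fintype.card V = 2) (u v : V) :
    G.degree u = G.degree v := by
  rcases eq_or_ne u v with rfl | huv
  · rfl
  have hcard2 : ({u, v} : Finset V).card = 2 := by
    rw [Finset.card_insert_of_notMem (by simpa using huv), Finset.card_singleton]
  have huniv : (Finset.univ : Finset V) = {u, v} :=
    (Finset.eq_of_subset_of_card_le (Finset.subset_univ _)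
      (by rw [Finset.card_univ, h, hcard2])).symm
  have hmem : ∀ w : V, w = u ∨ w = v := fun w => by
    have : w ∈ ({u, v} : Finset V) := huniv ▸ Finset.mem_univ w
    simpa using this
  have hNu : G.neighborFinset u = if G.Adj u v then {v} else ∅ := by
    ext w
    by_cases hadj : G.Adj u v
    · simp only [hadj, if_true, SimpleGraph.mem_neighborFinset, Finset.mem_singleton]
      constructor
      · intro hw
        rcases hmem w with rfl | rfl
        · exact absurd hw (G.loopless.irrefl _)
        · rfl
      · rintro rfl; exact hadj
    · simp only [hadj, if_false, SimpleGraph.mem_neighborFinset, Finset.notMem_empty,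
        iff_false]
      intro hw
      rcases hmem w with rfl | rfl
      · exact G.loopless.irrefl _ hw
      · exact hadj hw
  have hNv : G.neighborFinset v = if G.Adj u v then {u} else ∅ := by
    ext w
    by_cases hadj : G.Adj u v
    · simp only [hadj, if_true, SimpleGraph.mem_neighborFinset, Finset.mem_singleton]
      constructor
      · intro hw
        rcases hmem w with rfl | rfl
        · rfl
        · exact absurd hw (G.loopless.irrefl _)
      · rintro rfl; exact hadj.symm
    · simp only [hadj, if_false, SimpleGraph.mem_neighborFinset, Finset.notMem_empty,
        iff_false]
      intro hw
      rcases hmem w with rfl | rfl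
      · exact hadj hw.symm
      · exact G.loopless.irrefl _ hw
  unfold SimpleGraph.degree
  rw [hNu, hNv]
  by_cases hadj : G.Adj u v <;> simp [hadj]

lemma degrees_eq_of_cs
    (h : (Fintype.card V : ℤ) * (∑ v, (G.degree v : ℤ) ^ 2) = (∑ v, (G.degree v : ℤ)) ^ 2)
    (u v : V) : G.degree u = G.degree v := by
  set dZ : V → ℤ := fun v => (G.degree v : ℤ) with hdZ
  set A : ℤ := ∑ v, dZ v with hA
  set B : ℤ := ∑ v, dZ v ^ 2 with hB
  have e1 : ∀ u : V, ∑ v, (dZ u - dZ v) ^ 2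
      = (Fintype.card V : ℤ) * dZ u ^ 2 - (2 * dZ u) * A + B := by
    intro u
    have e0 : ∀ v : V, (dZ u - dZ v) ^ 2 = (dZ u ^ 2 - (2 * dZ u) * dZ v) + dZ v ^ 2 :=
      fun v => by ring
    rw [Finset.sum_congr rfl fun v _ => e0 v, Finset.sum_add_distrib,
      Finset.sum_sub_distrib, Finset.sum_const, ← Finset.mul_sum, Finset.card_univ,
      nsmul_eq_mul]
  have e2 : ∑ u : V, ∑ v : V, (dZ u - dZ v) ^ 2
      = 2 * ((Fintype.card V : ℤ) * B - A ^ 2) := by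
    rw [Finset.sum_congr rfl fun u _ => e1 u, Finset.sum_add_distrib,
      Finset.sum_sub_distrib, Finset.sum_const, ← Finset.mul_sum, Finset.card_univ,
      nsmul_eq_mul, ← Finset.sum_mul, ← Finset.mul_sum]
    ring
  have e3 : ∑ u : V, ∑ v : V, (dZ u - dZ v) ^ 2 = 0 := by rw [e2, h]; ring
  have e4 : ∀ u ∈ (Finset.univ : Finset V), ∀ v ∈ (Finset.univ : Finset V),
      (dZ u - dZ v) ^ 2 = 0 := by
    have hnn : ∀ u ∈ (Finset.univ : Finset V), (0:ℤ) ≤ ∑ v : V, (dZ u - dZ v) ^ 2 :=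
      fun u _ => Finset.sum_nonneg fun v _ => sq_nonneg _
    have h5 := (Finset.sum_eq_zero_iff_of_nonneg hnn).mp e3
    intro u hu v hv
    exact (Finset.sum_eq_zero_iff_of_nonneg fun v _ => sq_nonneg _).mp (h5 u hu) v hv
  have := e4 u (Finset.mem_univ u) v (Finset.mem_univ v)
  have h6 : dZ u = dZ v := by
    have := sq_eq_zero_iff.mp this
    linarith
  simp only [hdZ] at h6
  exact_mod_cast h6

end Aux

/-- `n·M2(Ḡ) - (n(n-1)/2 - m)·M1(Ḡ) ≥ m·M1(G) - n·M2(G)`, with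
equality if and only if `G` is regular. -/
theorem stmt_2 {V : Type*} [Fintype V] (G : SimpleGraph V) (n m : ℕ)
    (hn : n = Fintype.card V) (hn1 : 1 < n) (hm : m = gsize G) :
    (n : ℤ) * zagrebM2 Gᶜ - ((n : ℤ) * (n - 1) / 2 - m) * zagrebM1 Gᶜ ≥
      (m : ℤ) * zagrebM1 G - (n : ℤ) * zagrebM2 G ∧
    ((n : ℤ) * zagrebM2 Gᶜ - ((n : ℤ) * (n - 1) / 2 - m) * zagrebM1 Gᶜ =
      (m : ℤ) * zagrebM1 G - (n : ℤ) * zagrebM2 G ↔ gregular G) := by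
  classical
  subst hn hm
  set nN : ℕ := Fintype.card V with hnN
  set nZ : ℤ := (nN : ℤ) with hnZ
  set dZ : V → ℤ := fun v => (G.degree v : ℤ) with hdZ
  set A : ℤ := ∑ v, dZ v with hA
  set B : ℤ := ∑ v, dZ v ^ 2 with hB
  set t : V → ℤ := fun u => ∑ v ∈ G.neighborFinset u, dZ v with ht
  set C : ℤ := ∑ u, dZ u * t u with hC
  -- basic facts
  have hAm : A = 2 * (gsize G : ℤ) := by
    rw [gsize_eq]
    have := G.sum_degrees_eq_twice_card_edges
    rw [hA]
    push_cast [hdZ]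
    exact_mod_cast this
  have hBM1 : (zagrebM1 G : ℤ) = B := by
    rw [zagrebM1_eq]; push_cast [hB, hdZ]; rfl
  have htB : ∑ u, t u = B := by
    rw [ht, nbhd_transpose G (fun v => dZ v), hB]
    exact Finset.sum_congr rfl fun v _ => by rw [hdZ, sq]
  have hCM2 : 2 * (zagrebM2 G : ℤ) = C := by
    have hsym : ∀ u v : V, G.degree u * G.degree v = G.degree v * G.degree u :=
      fun u v => Nat.mul_comm _ _
    have h1 : 2 * zagrebM2 G = ∑ u, ∑ v ∈ G.neighborFinset u, G.degree u * G.degree v := by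
      rw [zagrebM2_eq G hsym]; exact edge_sum G _ hsym
    have h2 := congrArg (fun x : ℕ => (x : ℤ)) h1
    push_cast at h2
    rw [hC]
    refine h2.trans (Finset.sum_congr rfl fun u _ => ?_)
    show ∑ v ∈ G.neighborFinset u, dZ u * dZ v = dZ u * t u
    rw [ht, Finset.mul_sum]
  have hdc : ∀ v, (Gᶜ.degree v : ℤ) = nZ - 1 - dZ v := by
    intro v
    have h1 : Gᶜ.degree v = Fintype.card V - 1 - G.degree v := G.degree_compl v
    have h2 : G.degree v < Fintype.card V := G.degree_lt_card_verts v
    show (Gᶜ.degree v : ℤ) = ((Fintype.card V : ℕ) : ℤ) - 1 - (G.degree v : ℤ)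
    omega
  have hSD : ∑ v, (Gᶜ.degree v : ℤ) = nZ * (nZ - 1) - A := by
    rw [Finset.sum_congr rfl fun v _ => hdc v, Finset.sum_sub_distrib, Finset.sum_const,
      Finset.card_univ, nsmul_eq_mul, hA, hnZ, hnN]
    try ring
  have hM1c : (zagrebM1 Gᶜ : ℤ) = nZ * (nZ - 1) ^ 2 - 2 * (nZ - 1) * A + B := by
    rw [zagrebM1_eq Gᶜ]
    push_cast
    have h1 : ∀ v : V, ((Gᶜ.degree v : ℤ)) ^ 2
        = ((nZ-1)^2 - (2*(nZ-1)) * dZ v) + dZ v ^ 2 := fun v => by rw [hdc v]; ring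
    rw [Finset.sum_congr rfl fun v _ => h1 v, Finset.sum_add_distrib,
      Finset.sum_sub_distrib, Finset.sum_const, ← Finset.mul_sum, Finset.card_univ,
      nsmul_eq_mul, ← hA, ← hB, hnZ, hnN]
    try push_cast
    try ring
  have htN : ∀ u, ∑ v ∈ G.neighborFinset u, (Gᶜ.degree v : ℤ) = (nZ - 1) * dZ u - t u := by
    intro u
    rw [Finset.sum_congr rfl fun v _ => hdc v, Finset.sum_sub_distrib, Finset.sum_const,
      nsmul_eq_mul]
    have hcd : ((G.neighborFinset u).card : ℤ) = dZ u := by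
      show ((G.neighborFinset u).card : ℤ) = ((G.degree u : ℕ) : ℤ)
      norm_cast
    rw [hcd]
    show dZ u * (nZ - 1) - ∑ v ∈ G.neighborFinset u, dZ v
        = (nZ - 1) * dZ u - ∑ v ∈ G.neighborFinset u, dZ v
    ring
  have hM2c : 2 * (zagrebM2 Gᶜ : ℤ)
      = ∑ u, (nZ - 1 - dZ u) *
          ((nZ * (nZ - 1) - A) - (nZ - 1 - dZ u) - ((nZ - 1) * dZ u - t u)) := by
    have hsym : ∀ u v : V, Gᶜ.degree u * Gᶜ.degree v = Gᶜ.degree v * Gᶜ.degree u :=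
      fun u v => Nat.mul_comm _ _
    have h1 : 2 * zagrebM2 Gᶜ = ∑ u, ∑ v ∈ Gᶜ.neighborFinset u, Gᶜ.degree u * Gᶜ.degree v := by
      rw [zagrebM2_eq Gᶜ hsym]; exact edge_sum Gᶜ _ hsym
    have h2 := congrArg (fun x : ℕ => (x : ℤ)) h1
    push_cast at h2
    refine h2.trans (Finset.sum_congr rfl fun u _ => ?_)
    rw [← Finset.mul_sum, sum_compl_nbhd G (fun v => (Gᶜ.degree v : ℤ)) u,
      hSD, htN u, hdc u]
  -- closed form for 2 * M2 of complement
  have hM2c' : 2 * (zagrebM2 Gᶜ : ℤ)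
      = nZ * ((nZ-1) * ((nZ * (nZ - 1) - A) - (nZ-1)))
        + ((nZ-1)*(2-nZ) - ((nZ * (nZ - 1) - A) - (nZ-1))) * A
        + (nZ-2) * B + (nZ-1) * B - C := by
    rw [hM2c]
    have h1 : ∀ u : V, (nZ - 1 - dZ u) *
          ((nZ * (nZ - 1) - A) - (nZ - 1 - dZ u) - ((nZ - 1) * dZ u - t u))
        = (((nZ-1) * ((nZ * (nZ - 1) - A) - (nZ-1)))
            + ((nZ-1)*(2-nZ) - ((nZ * (nZ - 1) - A) - (nZ-1))) * dZ u
            + (nZ-2) * dZ u ^ 2)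
          + ((nZ-1) * t u - dZ u * t u) := fun u => by ring
    rw [Finset.sum_congr rfl fun u _ => h1 u, Finset.sum_add_distrib, Finset.sum_add_distrib,
      Finset.sum_add_distrib, Finset.sum_sub_distrib, Finset.sum_const, Finset.card_univ,
      nsmul_eq_mul, ← Finset.mul_sum, ← Finset.mul_sum, ← Finset.mul_sum, ← hA, ← hB, ← hC,
      htB, hnZ, hnN]
    push_cast
    ring
  -- arithmetic: the doubled difference
  have heven : 2 * (nZ * (nZ - 1) / 2) = nZ * (nZ - 1) := by
    have he : Even ((nZ - 1) * nZ) := by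
      have := Int.even_mul_succ_self (nZ - 1)
      simpa using this
    have he2 : Even (nZ * (nZ - 1)) := by rwa [mul_comm]
    obtain ⟨c, hc⟩ := he2
    omega
  have hkey : 2 * ((nZ : ℤ) * zagrebM2 Gᶜ - (nZ * (nZ - 1) / 2 - (gsize G : ℤ)) * zagrebM1 Gᶜ)
      - 2 * ((gsize G : ℤ) * zagrebM1 G - nZ * zagrebM2 G)
      = (nZ - 2) * (nZ * B - A ^ 2) := by
    have expand : 2 * ((nZ : ℤ) * zagrebM2 Gᶜ - (nZ * (nZ - 1) / 2 - (gsize G : ℤ)) * zagrebM1 Gᶜ)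
        - 2 * ((gsize G : ℤ) * zagrebM1 G - nZ * zagrebM2 G)
        = nZ * (2 * (zagrebM2 Gᶜ : ℤ))
          - (2 * (nZ * (nZ - 1) / 2) - 2 * (gsize G : ℤ)) * (zagrebM1 Gᶜ : ℤ)
          - 2 * (gsize G : ℤ) * (zagrebM1 G : ℤ) + nZ * (2 * (zagrebM2 G : ℤ)) := by ring
    rw [expand, heven, hM2c', hM1c, hBM1, hCM2, ← hAm]
    ring
  have hCS : A ^ 2 ≤ nZ * B := by
    have := sq_sum_le_card_mul_sum_sq (s := (Finset.univ : Finset V)) (f := dZ)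
    rw [Finset.card_univ] at this
    rw [hA, hB, hnZ, hnN]
    exact_mod_cast this
  have hn2 : (2 : ℤ) ≤ nZ := by rw [hnZ]; exact_mod_cast hn1
  constructor
  · -- inequality
    nlinarith [hkey, hCS, hn2]
  · constructor
    · intro heq
      have hz : (nZ - 2) * (nZ * B - A ^ 2) = 0 := by
        rw [← hkey]; rw [heq]; ring
      rcases mul_eq_zero.mp hz with h2 | h2
      · -- n = 2
        have hcard : Fintype.card V = 2 := by
          have : nZ = 2 := by linarith
          rw [hnZ, hnN] at this
          exact_mod_cast this
        obtain ⟨v0⟩ := Fintype.card_pos_iff.mp (by omega : 0 < Fintype.card V)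
        exact ⟨G.degree v0, fun v => by
          rw [gdeg_eq]; exact regular_of_card_two G hcard v v0⟩
      · -- Cauchy-Schwarz equality
        have hcs : (Fintype.card V : ℤ) * (∑ v, (G.degree v : ℤ) ^ 2)
            = (∑ v, (G.degree v : ℤ)) ^ 2 := by
          have : nZ * B = A ^ 2 := by linarith
          rw [hnZ, hnN] at this
          exact this
        obtain ⟨v0⟩ := Fintype.card_pos_iff.mp (by omega : 0 < Fintype.card V)
        exact ⟨G.degree v0, fun v => by
          rw [gdeg_eq]; exact degrees_eq_of_cs G hcs v v0⟩
    · rintro ⟨r, hr⟩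
      have hdr : ∀ v, dZ v = (r : ℤ) := by
        intro v
        have := hr v; rw [gdeg_eq] at this
        show (G.degree v : ℤ) = (r : ℤ)
        exact_mod_cast this
      have hAr : A = nZ * r := by
        rw [hA, Finset.sum_congr rfl fun v _ => hdr v, Finset.sum_const, Finset.card_univ,
          nsmul_eq_mul, hnZ, hnN]
      have hBr : B = nZ * r ^ 2 := by
        rw [hB, Finset.sum_congr rfl fun v _ => by rw [hdr v], Finset.sum_const,
          Finset.card_univ, nsmul_eq_mul, hnZ, hnN]
      have : (nZ - 2) * (nZ * B - A ^ 2) = 0 := by rw [hAr, hBr]; ring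
      linarith [hkey, this]
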